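/- Suppose additionally that P is symmetric and let λ₂ denote its second-largest eigenvalue (i.e., vᵀPv ≤ λ₂‖v‖² for every v with Σ_i v_i = 0, with equality attained for some such v ≠ 0). Then for every integer t ≥ 0: Tr( (Φ*)^t(I−J) ) ≤ N · ( (1−q)² + 2q(1−q)λ₂ + q² )^t. -/

import Mathlib

open Matrix BigOperators

/-- The map `Φ*(Y) = P_qᵀ Y P_q + q²(Ψ⁻(Pᵀ·Ψ(Y)) − Pᵀ Ψ⁻(Ψ(Y)) P)`,
where `P_q = (1−q)I + qP`. -/
noncomputable def PhiStar {N : ℕ} (P : Matrix (Fin N) (Fin N) ℝ) (q : ℝ)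
    (Y : Matrix (Fin N) (Fin N) ℝ) : Matrix (Fin N) (Fin N) ℝ :=
  ((1 - q) • (1 : Matrix (Fin N) (Fin N) ℝ) + q • P)ᵀ * Y *
      ((1 - q) • (1 : Matrix (Fin N) (Fin N) ℝ) + q • P)
    + q ^ 2 •
        (Matrix.diagonal (Pᵀ *ᵥ Matrix.diag Y)
          - Pᵀ * Matrix.diagonal (Matrix.diag Y) * P)

section Aux

variable {N : ℕ}

lemma posSemidef_of_real {M : Matrix (Fin N) (Fin N) ℝ} (hsym : Mᵀ = M)
    (h : ∀ x : Fin N → ℝ, 0 ≤ x ⬝ᵥ (M *ᵥ x)) : M.PosSemidef := by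
  refine Matrix.PosSemidef.of_dotProduct_mulVec_nonneg ?_ fun x => ?_
  · rw [Matrix.IsHermitian, Matrix.conjTranspose_eq_transpose_of_trivial, hsym]
  · simpa using h x

lemma form_nonneg_of_psd {M : Matrix (Fin N) (Fin N) ℝ} (hM : M.PosSemidef)
    (x : Fin N → ℝ) : 0 ≤ x ⬝ᵥ (M *ᵥ x) := by simpa using hM.dotProduct_mulVec_nonneg x

lemma transpose_eq_of_psd {M : Matrix (Fin N) (Fin N) ℝ} (hM : M.PosSemidef) : Mᵀ = M := by
  rw [← Matrix.conjTranspose_eq_transpose_of_trivial]; exact hM.1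

lemma psd_diag_nonneg {M : Matrix (Fin N) (Fin N) ℝ} (hM : M.PosSemidef) (i : Fin N) :
    0 ≤ M i i := by
  have := form_nonneg_of_psd hM (Pi.single i 1)
  simpa [Matrix.mulVec_single, single_dotProduct] using this

lemma psd_trace_nonneg {M : Matrix (Fin N) (Fin N) ℝ} (hM : M.PosSemidef) :
    0 ≤ M.trace := Finset.sum_nonneg fun i _ => psd_diag_nonneg hM i

lemma psd_smul {M : Matrix (Fin N) (Fin N) ℝ} (hM : M.PosSemidef) {c : ℝ} (hc : 0 ≤ c) :
    (c • M).PosSemidef := by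
  refine posSemidef_of_real ?_ fun x => ?_
  · rw [Matrix.transpose_smul, transpose_eq_of_psd hM]
  · rw [Matrix.smul_mulVec, dotProduct_smul, smul_eq_mul]
    exact mul_nonneg hc (form_nonneg_of_psd hM x)

lemma row_sq_le (p x : Fin N → ℝ) (hp : ∀ i, 0 ≤ p i) (hs : ∑ i, p i = 1) :
    (∑ i, p i * x i) ^ 2 ≤ ∑ i, p i * x i ^ 2 := by
  have h := Finset.sum_mul_sq_le_sq_mul_sq Finset.univ (fun i => Real.sqrt (p i))
    (fun i => Real.sqrt (p i) * x i)
  have e1 : ∀ i : Fin N, Real.sqrt (p i) * (Real.sqrt (p i) * x i) = p i * x i := fun i => by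
    rw [← mul_assoc, Real.mul_self_sqrt (hp i)]
  have e2 : ∀ i : Fin N, (Real.sqrt (p i)) ^ 2 = p i := fun i => Real.sq_sqrt (hp i)
  have e3 : ∀ i : Fin N, (Real.sqrt (p i) * x i) ^ 2 = p i * x i ^ 2 := fun i => by
    rw [mul_pow, e2]
  calc (∑ i, p i * x i) ^ 2
      = (∑ i, Real.sqrt (p i) * (Real.sqrt (p i) * x i)) ^ 2 := by simp_rw [e1]
    _ ≤ (∑ i, (Real.sqrt (p i)) ^ 2) * ∑ i, (Real.sqrt (p i) * x i) ^ 2 := h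
    _ = ∑ i, p i * x i ^ 2 := by simp_rw [e2, e3, hs, one_mul]

variable {P : Matrix (Fin N) (Fin N) ℝ}

lemma col_sum' (hProw : ∀ i, ∑ j, P i j = 1) (hPsymm : Pᵀ = P) :
    ∀ j, ∑ i, P i j = 1 := fun j => by
  have : ∀ i, P i j = P j i := fun i => by conv_lhs => rw [← hPsymm, Matrix.transpose_apply]
  simp_rw [this]; exact hProw j

lemma psd_one_sub_sq (hPnonneg : ∀ i j, 0 ≤ P i j) (hProw : ∀ i, ∑ j, P i j = 1)
    (hPsymm : Pᵀ = P) : (1 - P * P : Matrix (Fin N) (Fin N) ℝ).PosSemidef := by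
  refine posSemidef_of_real ?_ fun x => ?_
  · rw [Matrix.transpose_sub, Matrix.transpose_one, Matrix.transpose_mul, hPsymm]
  · have hxy : x ⬝ᵥ ((P * P) *ᵥ x) = (P *ᵥ x) ⬝ᵥ (P *ᵥ x) := by
      rw [← Matrix.mulVec_mulVec, Matrix.dotProduct_mulVec, ← Matrix.mulVec_transpose, hPsymm]
    have hle : (P *ᵥ x) ⬝ᵥ (P *ᵥ x) ≤ x ⬝ᵥ x := by
      have h1 : (P *ᵥ x) ⬝ᵥ (P *ᵥ x) = ∑ j, (∑ i, P j i * x i) ^ 2 := by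
        simp [dotProduct, Matrix.mulVec, sq]
      have h2 : ∀ j, (∑ i, P j i * x i) ^ 2 ≤ ∑ i, P j i * x i ^ 2 := fun j =>
        row_sq_le _ _ (fun i => hPnonneg j i) (hProw j)
      have h3 : ∑ j, ∑ i, P j i * (x i) ^ 2 = ∑ i, (x i) ^ 2 := by
        rw [Finset.sum_comm]
        refine Finset.sum_congr rfl fun i _ => ?_
        rw [← Finset.sum_mul, col_sum' hProw hPsymm i, one_mul]
      calc (P *ᵥ x) ⬝ᵥ (P *ᵥ x) = ∑ j, (∑ i, P j i * x i) ^ 2 := h1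
        _ ≤ ∑ j, ∑ i, P j i * (x i) ^ 2 := Finset.sum_le_sum fun j _ => h2 j
        _ = ∑ i, (x i) ^ 2 := h3
        _ = x ⬝ᵥ x := by simp [dotProduct, sq]
    rw [Matrix.sub_mulVec, dotProduct_sub, hxy]
    have : x ⬝ᵥ ((1 : Matrix (Fin N) (Fin N) ℝ) *ᵥ x) = x ⬝ᵥ x := by rw [Matrix.one_mulVec]
    rw [this]; linarith

lemma psd_qpart (hPnonneg : ∀ i j, 0 ≤ P i j) (hProw : ∀ i, ∑ j, P i j = 1)
    (ψ : Fin N → ℝ) (hψ : ∀ j, 0 ≤ ψ j) :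
    (Matrix.diagonal (Pᵀ *ᵥ ψ) - Pᵀ * Matrix.diagonal ψ * P).PosSemidef := by
  refine posSemidef_of_real ?_ fun x => ?_
  · rw [Matrix.transpose_sub, Matrix.diagonal_transpose, Matrix.transpose_mul,
      Matrix.transpose_mul, Matrix.transpose_transpose, Matrix.diagonal_transpose, mul_assoc]
  · have h1 : x ⬝ᵥ (Matrix.diagonal (Pᵀ *ᵥ ψ) *ᵥ x) = ∑ j, ψ j * ∑ i, P j i * x i ^ 2 := by
      simp only [dotProduct, Matrix.mulVec_diagonal]
      simp only [Matrix.mulVec, dotProduct, Matrix.transpose_apply]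
      simp_rw [Finset.sum_mul, Finset.mul_sum]
      rw [Finset.sum_comm]
      exact Finset.sum_congr rfl fun j _ => Finset.sum_congr rfl fun i _ => by ring
    have h2 : x ⬝ᵥ ((Pᵀ * Matrix.diagonal ψ * P) *ᵥ x)
        = ∑ j, ψ j * (∑ i, P j i * x i) ^ 2 := by
      rw [← Matrix.mulVec_mulVec, ← Matrix.mulVec_mulVec, Matrix.dotProduct_mulVec,
        ← Matrix.mulVec_transpose, Matrix.transpose_transpose]
      simp only [dotProduct, Matrix.mulVec_diagonal]
      refine Finset.sum_congr rfl fun j _ => ?_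
      have : (P *ᵥ x) j = ∑ i, P j i * x i := rfl
      rw [this]; ring
    rw [Matrix.sub_mulVec, dotProduct_sub, h1, h2, ← Finset.sum_sub_distrib]
    refine Finset.sum_nonneg fun j _ => ?_
    rw [← mul_sub]
    exact mul_nonneg (hψ j) (sub_nonneg.2 (row_sq_le _ _ (fun i => hPnonneg j i) (hProw j)))

lemma psd_B1 (hProw : ∀ i, ∑ j, P i j = 1) (hPsymm : Pᵀ = P) (hN : 2 ≤ N) (lam2 : ℝ)
    (hlam2_ub : ∀ v : Fin N → ℝ, ∑ i, v i = 0 →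
      v ⬝ᵥ (P *ᵥ v) ≤ lam2 * ∑ i, v i ^ 2) :
    (lam2 • ((1 : Matrix (Fin N) (Fin N) ℝ) - Matrix.of fun _ _ => (N : ℝ)⁻¹)
      - (P - Matrix.of fun _ _ => (N : ℝ)⁻¹)).PosSemidef := by
  have hNne : (N : ℝ) ≠ 0 := by positivity
  refine posSemidef_of_real ?_ fun x => ?_
  · have hJ : (Matrix.of fun _ _ => (N : ℝ)⁻¹ : Matrix (Fin N) (Fin N) ℝ)ᵀ
        = Matrix.of fun _ _ => (N : ℝ)⁻¹ := by ext i j; rfl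
    rw [Matrix.transpose_sub, Matrix.transpose_smul, Matrix.transpose_sub,
      Matrix.transpose_sub, Matrix.transpose_one, hJ, hPsymm]
  · set s : ℝ := ∑ i, x i with hs
    set w : Fin N → ℝ := fun i => x i - (N : ℝ)⁻¹ * s with hw
    have hwsum : ∑ i, w i = 0 := by
      simp only [hw, Finset.sum_sub_distrib, Finset.sum_const, Finset.card_univ,
        Fintype.card_fin, nsmul_eq_mul, ← hs]
      field_simp
      ring
    have hub := hlam2_ub w hwsum
    have hPxsum : ∑ i, (P *ᵥ x) i = s := by
      have : ∀ i, (P *ᵥ x) i = ∑ j, P i j * x j := fun i => rfl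
      simp_rw [this]
      rw [Finset.sum_comm]
      simp_rw [← Finset.sum_mul]
      rw [hs]
      exact Finset.sum_congr rfl fun j _ => by rw [col_sum' hProw hPsymm j, one_mul]
    have hPw : ∀ i, (P *ᵥ w) i = (P *ᵥ x) i - (N : ℝ)⁻¹ * s := by
      intro i
      have h1 : (P *ᵥ w) i = ∑ j, P i j * (x j - (N : ℝ)⁻¹ * s) := rfl
      rw [h1]
      simp_rw [mul_sub]
      rw [Finset.sum_sub_distrib, ← Finset.sum_mul, hProw i, one_mul]
      rfl
    have hA : w ⬝ᵥ (P *ᵥ w) = x ⬝ᵥ (P *ᵥ x) - (N : ℝ)⁻¹ * s ^ 2 := by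
      have : w ⬝ᵥ (P *ᵥ w)
          = ∑ i, (x i - (N : ℝ)⁻¹ * s) * ((P *ᵥ x) i - (N : ℝ)⁻¹ * s) := by
        refine Finset.sum_congr rfl fun i _ => ?_
        rw [hPw i]
      rw [this]
      have expand : ∀ i, (x i - (N : ℝ)⁻¹ * s) * ((P *ᵥ x) i - (N : ℝ)⁻¹ * s)
          = x i * (P *ᵥ x) i - (N : ℝ)⁻¹ * s * x i - (N : ℝ)⁻¹ * s * (P *ᵥ x) i
            + ((N : ℝ)⁻¹ * s) ^ 2 := fun i => by ring
      simp_rw [expand]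
      rw [Finset.sum_add_distrib, Finset.sum_sub_distrib, Finset.sum_sub_distrib,
        ← Finset.mul_sum, ← Finset.mul_sum, ← hs, hPxsum, Finset.sum_const,
        Finset.card_univ, Fintype.card_fin, nsmul_eq_mul]
      have : x ⬝ᵥ (P *ᵥ x) = ∑ i, x i * (P *ᵥ x) i := rfl
      rw [this]
      field_simp
      ring
    have hB : ∑ i, w i ^ 2 = (∑ i, x i ^ 2) - (N : ℝ)⁻¹ * s ^ 2 := by
      have expand : ∀ i, w i ^ 2
          = x i ^ 2 - 2 * ((N : ℝ)⁻¹ * s) * x i + ((N : ℝ)⁻¹ * s) ^ 2 := fun i => by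
        rw [hw]; ring
      simp_rw [expand]
      rw [Finset.sum_add_distrib, Finset.sum_sub_distrib, ← Finset.mul_sum, ← hs,
        Finset.sum_const, Finset.card_univ, Fintype.card_fin, nsmul_eq_mul]
      field_simp
      ring
    have hJx : x ⬝ᵥ ((Matrix.of fun _ _ => (N : ℝ)⁻¹ : Matrix (Fin N) (Fin N) ℝ) *ᵥ x)
        = (N : ℝ)⁻¹ * s ^ 2 := by
      have : ∀ i, ((Matrix.of fun _ _ => (N : ℝ)⁻¹ : Matrix (Fin N) (Fin N) ℝ) *ᵥ x) i
          = (N : ℝ)⁻¹ * s := fun i => by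
        have : ((Matrix.of fun _ _ => (N : ℝ)⁻¹ : Matrix (Fin N) (Fin N) ℝ) *ᵥ x) i
            = ∑ j, (N : ℝ)⁻¹ * x j := rfl
        rw [this, ← Finset.mul_sum, ← hs]
      simp_rw [dotProduct, this]
      rw [← Finset.sum_mul, ← hs]
      ring
    have hIx : x ⬝ᵥ ((1 : Matrix (Fin N) (Fin N) ℝ) *ᵥ x) = ∑ i, x i ^ 2 := by
      rw [Matrix.one_mulVec]
      simp [dotProduct, sq]
    rw [Matrix.sub_mulVec, dotProduct_sub, Matrix.smul_mulVec,
      dotProduct_smul, Matrix.sub_mulVec, dotProduct_sub,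
      Matrix.sub_mulVec, dotProduct_sub, hJx, hIx, smul_eq_mul]
    rw [hA, hB] at hub
    linarith

lemma PhiStar_smul (q c : ℝ) (X : Matrix (Fin N) (Fin N) ℝ) :
    PhiStar P q (c • X) = c • PhiStar P q X := by
  unfold PhiStar
  simp only [Matrix.diag_smul, Matrix.mulVec_smul, Matrix.diagonal_smul,
    mul_smul_comm, smul_mul_assoc, smul_sub, smul_add, smul_smul]
  module

lemma PhiStar_sub (q : ℝ) (X Y : Matrix (Fin N) (Fin N) ℝ) :
    PhiStar P q (X - Y) = PhiStar P q X - PhiStar P q Y := by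
  have hd : Matrix.diagonal (Pᵀ *ᵥ (X.diag - Y.diag))
      = Matrix.diagonal (Pᵀ *ᵥ X.diag) - Matrix.diagonal (Pᵀ *ᵥ Y.diag) := by
    rw [Matrix.mulVec_sub]; exact (Matrix.diagonal_sub _ _).symm
  have hd2 : Matrix.diagonal (X.diag - Y.diag)
      = Matrix.diagonal X.diag - Matrix.diagonal Y.diag := (Matrix.diagonal_sub _ _).symm
  unfold PhiStar
  simp only [Matrix.diag_sub, hd, hd2, Matrix.mul_sub, Matrix.sub_mul, smul_sub]
  abel

lemma phi_one_sub_J (hProw : ∀ i, ∑ j, P i j = 1) (hPsymm : Pᵀ = P) (q : ℝ) :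
    PhiStar P q ((1 : Matrix (Fin N) (Fin N) ℝ) - Matrix.of fun _ _ => (N : ℝ)⁻¹)
      = ((1 - q) • (1 : Matrix (Fin N) (Fin N) ℝ) + q • P)
          * ((1 : Matrix (Fin N) (Fin N) ℝ) - Matrix.of fun _ _ => (N : ℝ)⁻¹)
          * ((1 - q) • (1 : Matrix (Fin N) (Fin N) ℝ) + q • P)
        + (q ^ 2 * (1 - (N : ℝ)⁻¹)) • ((1 : Matrix (Fin N) (Fin N) ℝ) - P * P) := by
  have hdiag : Matrix.diag ((1 : Matrix (Fin N) (Fin N) ℝ) - Matrix.of fun _ _ => (N : ℝ)⁻¹)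
      = fun _ => 1 - (N : ℝ)⁻¹ := by
    funext i
    simp [Matrix.diag, Matrix.one_apply]
  have hmv : Pᵀ *ᵥ (fun _ => 1 - (N : ℝ)⁻¹) = fun _ => 1 - (N : ℝ)⁻¹ := by
    funext i
    have : (Pᵀ *ᵥ (fun _ => 1 - (N : ℝ)⁻¹)) i = ∑ j, P j i * (1 - (N : ℝ)⁻¹) := rfl
    rw [this, ← Finset.sum_mul, col_sum' hProw hPsymm i, one_mul]
  have hdiagc : (Matrix.diagonal (fun _ => 1 - (N : ℝ)⁻¹) : Matrix (Fin N) (Fin N) ℝ)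
      = (1 - (N : ℝ)⁻¹) • 1 := by
    ext i j
    by_cases h : i = j <;> simp [h, Matrix.diagonal_apply, Matrix.one_apply]
  unfold PhiStar
  rw [hdiag, hmv, hdiagc]
  have htr : ((1 - q) • (1 : Matrix (Fin N) (Fin N) ℝ) + q • P)ᵀ
      = ((1 - q) • (1 : Matrix (Fin N) (Fin N) ℝ) + q • P) := by
    rw [Matrix.transpose_add, Matrix.transpose_smul, Matrix.transpose_smul,
      Matrix.transpose_one, hPsymm]
  rw [htr, hPsymm]
  congr 1
  rw [Matrix.mul_smul, Matrix.mul_one, Matrix.smul_mul, smul_sub, smul_smul, smul_sub]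
  module

lemma key_identity (hN : 2 ≤ N) (hProw : ∀ i, ∑ j, P i j = 1) (hPsymm : Pᵀ = P)
    (q lam2 : ℝ) :
    ((1 - q) ^ 2 + 2 * q * (1 - q) * lam2 + q ^ 2)
        • ((1 : Matrix (Fin N) (Fin N) ℝ) - Matrix.of fun _ _ => (N : ℝ)⁻¹)
      - PhiStar P q ((1 : Matrix (Fin N) (Fin N) ℝ) - Matrix.of fun _ _ => (N : ℝ)⁻¹)
    = (2 * q * (1 - q)) •
        (lam2 • ((1 : Matrix (Fin N) (Fin N) ℝ) - Matrix.of fun _ _ => (N : ℝ)⁻¹)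
          - (P - Matrix.of fun _ _ => (N : ℝ)⁻¹))
      + (q ^ 2 * (N : ℝ)⁻¹) • ((1 : Matrix (Fin N) (Fin N) ℝ) - P * P) := by
  have hNne : (N : ℝ) ≠ 0 := by
    have : (0 : ℝ) < N := by exact_mod_cast Nat.lt_of_lt_of_le Nat.zero_lt_two hN
    exact ne_of_gt this
  set J : Matrix (Fin N) (Fin N) ℝ := Matrix.of fun _ _ => (N : ℝ)⁻¹ with hJdef
  have hPJ : P * J = J := by
    ext i j
    simp only [Matrix.mul_apply, hJdef, Matrix.of_apply]
    rw [← Finset.sum_mul, hProw i, one_mul]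
  have hJP : J * P = J := by
    ext i j
    simp only [Matrix.mul_apply, hJdef, Matrix.of_apply]
    rw [← Finset.mul_sum, col_sum' hProw hPsymm j, mul_one]
  have hJJ : J * J = J := by
    ext i j
    simp only [Matrix.mul_apply, hJdef, Matrix.of_apply, Finset.sum_const,
      Finset.card_univ, Fintype.card_fin, nsmul_eq_mul]
    field_simp
  rw [phi_one_sub_J hProw hPsymm q]
  rw [← hJdef]
  simp only [Matrix.mul_sub, Matrix.sub_mul, Matrix.mul_add, Matrix.add_mul,
    smul_mul_assoc, mul_smul_comm, Matrix.mul_one, Matrix.one_mul,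
    hPJ, hJP, hJJ, smul_smul, smul_sub, smul_add, sub_smul, add_smul]
  module

end Aux

/-- If `P` is symmetric with second-largest eigenvalue `λ₂`, then
`Tr((Φ*)ᵗ(I−J)) ≤ N ((1−q)² + 2q(1−q)λ₂ + q²)ᵗ`. -/
theorem stmt12 (N : ℕ) (hN : 2 ≤ N) (P : Matrix (Fin N) (Fin N) ℝ)
    (hPnonneg : ∀ i j, 0 ≤ P i j) (hProw : ∀ i, ∑ j, P i j = 1)
    (hPsymm : Pᵀ = P)
    (q : ℝ) (hq0 : 0 ≤ q) (hq1 : q ≤ 1)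
    (lam2 : ℝ)
    (hlam2_ub : ∀ v : Fin N → ℝ, ∑ i, v i = 0 →
      v ⬝ᵥ (P *ᵥ v) ≤ lam2 * ∑ i, v i ^ 2)
    (hlam2_attained : ∃ v : Fin N → ℝ, v ≠ 0 ∧ ∑ i, v i = 0 ∧
      v ⬝ᵥ (P *ᵥ v) = lam2 * ∑ i, v i ^ 2)
    (t : ℕ) :
    ((PhiStar P q)^[t]
        ((1 : Matrix (Fin N) (Fin N) ℝ) - Matrix.of fun _ _ => (N : ℝ)⁻¹)).trace
      ≤ (N : ℝ) * ((1 - q) ^ 2 + 2 * q * (1 - q) * lam2 + q ^ 2) ^ t := by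
  have hNne : (N : ℝ) ≠ 0 := by
    have : (0 : ℝ) < N := by exact_mod_cast Nat.lt_of_lt_of_le Nat.zero_lt_two hN
    exact ne_of_gt this
  set E : Matrix (Fin N) (Fin N) ℝ :=
    (1 : Matrix (Fin N) (Fin N) ℝ) - Matrix.of fun _ _ => (N : ℝ)⁻¹ with hEdef
  set μ : ℝ := (1 - q) ^ 2 + 2 * q * (1 - q) * lam2 + q ^ 2 with hμdef
  -- lam2 ≥ -1
  have hlam2_low : -1 ≤ lam2 := by
    obtain ⟨v, hv0, hvsum, hveq⟩ := hlam2_attained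
    have hv2pos : 0 < ∑ i, v i ^ 2 := by
      have : ∃ i, v i ≠ 0 := by
        by_contra h
        push_neg at h
        exact hv0 (funext fun i => h i)
      obtain ⟨i, hi⟩ := this
      refine Finset.sum_pos' (fun j _ => sq_nonneg _) ⟨i, Finset.mem_univ i, ?_⟩
      positivity
    have hexp : 0 ≤ (∑ i, v i ^ 2) + v ⬝ᵥ (P *ᵥ v) := by
      have hterm : 0 ≤ ∑ i, ∑ j, P i j * (v i + v j) ^ 2 / 2 :=
        Finset.sum_nonneg fun i _ => Finset.sum_nonneg fun j _ => by
          have := hPnonneg i j; positivity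
      have hid : ∑ i, ∑ j, P i j * (v i + v j) ^ 2 / 2
          = (∑ i, v i ^ 2) + v ⬝ᵥ (P *ᵥ v) := by
        have expand : ∀ i j, P i j * (v i + v j) ^ 2 / 2
            = P i j * v i ^ 2 / 2 + P i j * v j ^ 2 / 2 + v i * (P i j * v j) := by
          intro i j; ring
        simp_rw [expand, Finset.sum_add_distrib]
        have e1 : ∑ i, ∑ j, P i j * v i ^ 2 / 2 = (∑ i, v i ^ 2) / 2 := by
          rw [Finset.sum_div]
          refine Finset.sum_congr rfl fun i _ => ?_
          rw [← Finset.sum_div, ← Finset.sum_mul, hProw i, one_mul]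
        have e2 : ∑ i, ∑ j, P i j * v j ^ 2 / 2 = (∑ j, v j ^ 2) / 2 := by
          rw [Finset.sum_comm, Finset.sum_div]
          refine Finset.sum_congr rfl fun j _ => ?_
          rw [← Finset.sum_div, ← Finset.sum_mul, col_sum' hProw hPsymm j, one_mul]
        have e3 : ∑ i, ∑ j, v i * (P i j * v j) = v ⬝ᵥ (P *ᵥ v) := by
          refine Finset.sum_congr rfl fun i _ => ?_
          rw [← Finset.mul_sum]
          rfl
        rw [e1, e2, e3]
        ring
      linarith [hid ▸ hterm]
    rw [hveq] at hexp
    nlinarith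
  have hμ0 : 0 ≤ μ := by
    rw [hμdef]
    nlinarith [mul_nonneg (mul_nonneg hq0 (sub_nonneg.2 hq1)) (by linarith : 0 ≤ lam2 + 1),
      sq_nonneg (1 - 2 * q)]
  -- PhiStar preserves PSD
  have hPhiPSD : ∀ X : Matrix (Fin N) (Fin N) ℝ, X.PosSemidef → (PhiStar P q X).PosSemidef := by
    intro X hX
    unfold PhiStar
    refine Matrix.PosSemidef.add ?_ ?_
    · have h := hX.conjTranspose_mul_mul_same ((1 - q) • (1 : Matrix (Fin N) (Fin N) ℝ) + q • P)
      rwa [Matrix.conjTranspose_eq_transpose_of_trivial] at h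
    · exact psd_smul (psd_qpart hPnonneg hProw X.diag fun j => psd_diag_nonneg hX j)
        (sq_nonneg q)
  -- the one-step PSD gap
  have hstep : (μ • E - PhiStar P q E).PosSemidef := by
    rw [hEdef, hμdef, key_identity hN hProw hPsymm q lam2]
    refine Matrix.PosSemidef.add (psd_smul ?_ ?_) (psd_smul ?_ ?_)
    · exact psd_B1 hProw hPsymm hN lam2 hlam2_ub
    · have h1q : 0 ≤ 1 - q := by linarith
      exact mul_nonneg (mul_nonneg (by norm_num) hq0) h1q
    · exact psd_one_sub_sq hPnonneg hProw hPsymm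
    · positivity
  -- main induction
  have key : ∀ s : ℕ, (μ ^ s • E - (PhiStar P q)^[s] E).PosSemidef := by
    intro s
    induction s with
    | zero =>
        simpa using Matrix.PosSemidef.zero
    | succ n ih =>
        have heq : μ ^ (n + 1) • E - (PhiStar P q)^[n + 1] E
            = μ ^ n • (μ • E - PhiStar P q E)
              + PhiStar P q (μ ^ n • E - (PhiStar P q)^[n] E) := by
          have hlin : PhiStar P q (μ ^ n • E - (PhiStar P q)^[n] E)
              = μ ^ n • PhiStar P q E - PhiStar P q ((PhiStar P q)^[n] E) := by
            rw [PhiStar_sub, PhiStar_smul]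
          rw [Function.iterate_succ_apply', hlin, pow_succ]
          module
        rw [heq]
        exact Matrix.PosSemidef.add (psd_smul hstep (pow_nonneg hμ0 n)) (hPhiPSD _ ih)
  -- conclude via traces
  have htrE : E.trace = (N : ℝ) - 1 := by
    rw [hEdef, Matrix.trace_sub, Matrix.trace_one]
    have : (Matrix.of fun _ _ => (N : ℝ)⁻¹ : Matrix (Fin N) (Fin N) ℝ).trace = 1 := by
      unfold Matrix.trace
      simp only [Matrix.diag, Matrix.of_apply, Finset.sum_const, Finset.card_univ,
        Fintype.card_fin, nsmul_eq_mul]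
      field_simp
    rw [this]
    simp
  have htr := psd_trace_nonneg (key t)
  rw [Matrix.trace_sub, Matrix.trace_smul, smul_eq_mul, htrE, sub_nonneg] at htr
  have hfin : μ ^ t * ((N : ℝ) - 1) ≤ (N : ℝ) * μ ^ t := by
    have hp := pow_nonneg hμ0 t
    nlinarith
  calc ((PhiStar P q)^[t] E).trace ≤ μ ^ t * ((N : ℝ) - 1) := htr
    _ ≤ (N : ℝ) * μ ^ t := hfin
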